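/- arXiv:1712.06043 — 11 statements merged into one kernel-verified Lean document; each statement's English description precedes it below -/
import Mathlib

section
/- Let (A, ≤, →) be an implicative structure with associated application map ∘, and let k = ⨅_{a,b ∈ A} (a → (b → a)). Then for all a, b ∈ A: (k ∘ a) ∘ b ≤ a. -/
/-- The application map associated to an implication on a complete lattice. -/
def appOf {A : Type*} [CompleteLattice A] (imp : A → A → A) (a b : A) : A :=
  sInf {c | a ≤ imp b c}

/-- With `k = ⨅_{a,b} (a → (b → a))`, one has `(k ∘ a) ∘ b ≤ a` for all `a b`. -/
theorem k_combinator {A : Type*} [CompleteLattice A] (imp : A → A → A)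
    (hmono : ∀ a a' b b' : A, a' ≤ a → b ≤ b' → imp a b ≤ imp a' b')
    (hinf : ∀ (a : A) (B : Set A), imp a (sInf B) = ⨅ b ∈ B, imp a b)
    (a b : A) :
    appOf imp (appOf imp (⨅ (x : A) (y : A), imp x (imp y x)) a) b ≤ a := by
  have h1 : (⨅ (x : A) (y : A), imp x (imp y x)) ≤ imp a (imp b a) :=
    le_trans (iInf_le _ a) (iInf_le _ b)
  have h2 : appOf imp (⨅ (x : A) (y : A), imp x (imp y x)) a ≤ imp b a := sInf_le h1
  exact sInf_le h2
end

section
/- Let (A, ≤, →) be an implicative structure with associated application map ∘, and let s = ⨅_{a,b,c ∈ A} ((a → (b → c)) → ((a → b) → (a → c))). Then for all a, b, c ∈ A: ((s ∘ a) ∘ b) ∘ c ≤ (a ∘ c) ∘ (b ∘ c). -/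
theorem appOf_le {A : Type*} [CompleteLattice A] (imp : A → A → A) {x y z : A}
    (h : x ≤ imp y z) : appOf imp x y ≤ z :=
  sInf_le h

theorem le_imp_appOf {A : Type*} [CompleteLattice A] (imp : A → A → A)
    (hinf : ∀ (a : A) (B : Set A), imp a (sInf B) = ⨅ b ∈ B, imp a b)
    (x y : A) : x ≤ imp y (appOf imp x y) := by
  rw [appOf, hinf]
  exact le_iInf₂ fun c hc => hc

/-- With `s = ⨅_{a,b,c} ((a → (b → c)) → ((a → b) → (a → c)))`, one has
`((s ∘ a) ∘ b) ∘ c ≤ (a ∘ c) ∘ (b ∘ c)` for all `a b c`. -/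
theorem s_combinator {A : Type*} [CompleteLattice A] (imp : A → A → A)
    (hmono : ∀ a a' b b' : A, a' ≤ a → b ≤ b' → imp a b ≤ imp a' b')
    (hinf : ∀ (a : A) (B : Set A), imp a (sInf B) = ⨅ b ∈ B, imp a b)
    (a b c : A) :
    appOf imp (appOf imp (appOf imp
        (⨅ (x : A) (y : A) (z : A), imp (imp x (imp y z)) (imp (imp x y) (imp x z))) a) b) c
      ≤ appOf imp (appOf imp a c) (appOf imp b c) := by
  set T := appOf imp (appOf imp a c) (appOf imp b c) with hT
  apply appOf_le imp
  apply le_trans (appOf_le imp (z := imp c T) ?_) le_rfl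
  apply le_trans (appOf_le imp (z := imp b (imp c T)) ?_) le_rfl
  -- need: s ≤ imp a (imp b (imp c T))
  calc (⨅ (x : A) (y : A) (z : A), imp (imp x (imp y z)) (imp (imp x y) (imp x z)))
      ≤ imp (imp c (imp (appOf imp b c) T)) (imp (imp c (appOf imp b c)) (imp c T)) := by
        refine le_trans (iInf_le _ c) (le_trans (iInf_le _ (appOf imp b c)) (iInf_le _ T))
    _ ≤ imp a (imp b (imp c T)) := by
        apply hmono
        · calc a ≤ imp c (appOf imp a c) := le_imp_appOf imp hinf a c
            _ ≤ imp c (imp (appOf imp b c) T) :=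
              hmono _ _ _ _ le_rfl (le_imp_appOf imp hinf _ _)
        · exact hmono _ _ _ _ (le_imp_appOf imp hinf b c) le_rfl
end

section
/- Let (A, S_A) and (B, S_B) be implicative algebras and let f : A → B be a function satisfying conditions (1) f(S_A) ⊆ S_B and (3) f(⨅ P) = ⨅ f(P) for every subset P ⊆ A. Then f satisfies condition (2) [there exists r ∈ S_B with r ≤ f(a → a′) → (f(a) → f(a′)) for all a, a′ ∈ A with a → a′ ∈ S_A] if and only if f satisfies condition (2′): there exists t ∈ S_B such that for all s ∈ S_A and all a ∈ A, (t ∘ f(s)) ∘ f(a) ≤ f(s ∘ a). -/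
/-- For a function `f` between implicative algebras satisfying conditions (1) and (3)
of the definition of applicative morphism, condition (2) is equivalent to condition (2′):
there is `t ∈ S_B` with `(t ∘ f(s)) ∘ f(a) ≤ f(s ∘ a)` for all `s ∈ S_A` and `a ∈ A`. -/
theorem applicative_condition_iff {A B : Type*} [CompleteLattice A] [CompleteLattice B]
    (impA : A → A → A) (impB : B → B → B)
    (hmonoA : ∀ a a' b b' : A, a' ≤ a → b ≤ b' → impA a b ≤ impA a' b')
    (hinfA : ∀ (a : A) (P : Set A), impA a (sInf P) = ⨅ b ∈ P, impA a b)
    (hmonoB : ∀ a a' b b' : B, a' ≤ a → b ≤ b' → impB a b ≤ impB a' b')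
    (hinfB : ∀ (a : B) (P : Set B), impB a (sInf P) = ⨅ b ∈ P, impB a b)
    (SA : Set A) (SB : Set B)
    (SAup : ∀ a b : A, a ∈ SA → a ≤ b → b ∈ SA)
    (SAmp : ∀ a b : A, impA a b ∈ SA → a ∈ SA → b ∈ SA)
    (SAk : (⨅ (x : A) (y : A), impA x (impA y x)) ∈ SA)
    (SAs : (⨅ (x : A) (y : A) (z : A),
        impA (impA x (impA y z)) (impA (impA x y) (impA x z))) ∈ SA)
    (SBup : ∀ a b : B, a ∈ SB → a ≤ b → b ∈ SB)
    (SBmp : ∀ a b : B, impB a b ∈ SB → a ∈ SB → b ∈ SB)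
    (SBk : (⨅ (x : B) (y : B), impB x (impB y x)) ∈ SB)
    (SBs : (⨅ (x : B) (y : B) (z : B),
        impB (impB x (impB y z)) (impB (impB x y) (impB x z))) ∈ SB)
    (f : A → B)
    (h1 : ∀ a ∈ SA, f a ∈ SB)
    (h3 : ∀ P : Set A, f (sInf P) = sInf (f '' P)) :
    (∃ r ∈ SB, ∀ a a' : A, impA a a' ∈ SA → r ≤ impB (f (impA a a')) (impB (f a) (f a')))
      ↔ (∃ t ∈ SB, ∀ s ∈ SA, ∀ a : A,
          appOf impB (appOf impB t (f s)) (f a) ≤ f (appOf impA s a)) := by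
  have adjB : ∀ a b c : B, appOf impB a b ≤ c ↔ a ≤ impB b c := by
    intro a b c
    constructor
    · intro h
      have h1 : a ≤ impB b (appOf impB a b) := by
        rw [appOf, hinfB]
        exact le_iInf₂ fun d hd => hd
      exact h1.trans (hmonoB b b _ c le_rfl h)
    · intro h; exact sInf_le h
  have adjA : ∀ a b c : A, appOf impA a b ≤ c ↔ a ≤ impA b c := by
    intro a b c
    constructor
    · intro h
      have h1 : a ≤ impA b (appOf impA a b) := by
        rw [appOf, hinfA]
        exact le_iInf₂ fun d hd => hd
      exact h1.trans (hmonoA b b _ c le_rfl h)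
    · intro h; exact sInf_le h
  have appmonoB : ∀ (a : B) {b b' : B}, b ≤ b' → appOf impB a b ≤ appOf impB a b' := by
    intro a b b' h
    exact sInf_le_sInf fun c hc => le_trans hc (hmonoB b' b c c h le_rfl)
  have fmono : ∀ {x y : A}, x ≤ y → f x ≤ f y := by
    intro x y h
    have hx : sInf ({x, y} : Set A) = x := by
      rw [sInf_pair]; exact inf_eq_left.mpr h
    have h3' := h3 {x, y}
    rw [hx] at h3'
    rw [h3', Set.image_pair, sInf_pair]
    exact inf_le_right
  constructor
  · rintro ⟨r, hr, hr2⟩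
    refine ⟨r, hr, ?_⟩
    intro s hs a
    have hle : s ≤ impA a (appOf impA s a) := (adjA s a _).mp le_rfl
    have hmem : impA a (appOf impA s a) ∈ SA := SAup s _ hs hle
    have h := hr2 a (appOf impA s a) hmem
    have step1 : appOf impB r (f (impA a (appOf impA s a)))
        ≤ impB (f a) (f (appOf impA s a)) := (adjB _ _ _).mpr h
    have step2 : appOf impB r (f s) ≤ impB (f a) (f (appOf impA s a)) :=
      le_trans (appmonoB r (fmono hle)) step1
    exact (adjB _ _ _).mpr step2
  · rintro ⟨t, ht, ht2⟩
    refine ⟨t, ht, ?_⟩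
    intro a a' hsa
    have h := ht2 _ hsa a
    have hs : appOf impA (impA a a') a ≤ a' := (adjA _ _ _).mpr le_rfl
    have key : appOf impB (appOf impB t (f (impA a a'))) (f a) ≤ f a' :=
      h.trans (fmono hs)
    exact (adjB _ _ _).mp ((adjB _ _ _).mp key)
end

section
/- Let K (based on Π) and K′ (based on Π′) be abstract Krivine structures and let f : Π → Π′ be an applicative morphism of AKSs. Then the induced map 𝒫(f) : 𝒫(Π) → 𝒫(Π′), P ↦ f(P) (the image of P under f), is an applicative morphism between the implicative algebras A(K) and A(K′). Moreover, if f is a computationally dense morphism of AKSs, then 𝒫(f) is a computationally dense applicative morphism of implicative algebras. -/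
/-- An abstract Krivine structure (AKS). -/
structure AKS (X : Type*) where
  push : X → X → X
  app : X → X → X
  perp : X → X → Prop
  compat : ∀ t s p, perp t (push s p) → perp (app t s) p
  QP : Set X
  QP_app : ∀ t s, t ∈ QP → s ∈ QP → app t s ∈ QP
  combK : X
  combS : X
  K_mem : combK ∈ QP
  S_mem : combS ∈ QP
  K_cond : ∀ t s p, perp t p → perp combK (push t (push s p))
  S_cond : ∀ t s u p, perp (app (app t u) (app s u)) p →
    perp combS (push t (push s (push u p)))

/-- The left orthogonal `⊥P` of a set `P`. -/
def AKS.orth {X : Type*} (K : AKS X) (P : Set X) : Set X :=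
  {t | ∀ p ∈ P, K.perp t p}

/-- The implication `P → Q = {t·π : t ∈ ⊥P, π ∈ Q}` of the realizability lattice. -/
def AKS.impSet {X : Type*} (K : AKS X) (P Q : Set X) : Set X :=
  {x | ∃ t ∈ K.orth P, ∃ p ∈ Q, x = K.push t p}

/-- The separator of the implicative algebra `A(K)`: sets orthogonal to
some quasi-proof. -/
def AKS.sep {X : Type*} (K : AKS X) : Set (Set X) :=
  {P | ∃ t ∈ K.QP, t ∈ K.orth P}

/-- An applicative morphism of AKSs. -/
def IsAKSAppMor {X Y : Type*} (K : AKS X) (K' : AKS Y) (f : X → Y) : Prop :=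
  (∀ P : Set X, P ∈ K.sep → (f '' P) ∈ K'.sep) ∧
  ∃ r ∈ K'.QP, ∀ P P' : Set X, K.impSet P' P ∈ K.sep →
    r ∈ K'.orth (K'.impSet (f '' K.impSet P' P) (K'.impSet (f '' P') (f '' P)))

/-- A computationally dense morphism of AKSs. -/
def IsAKSCompDense {X Y : Type*} (K : AKS X) (K' : AKS Y) (f : X → Y) : Prop :=
  IsAKSAppMor K K' f ∧
  ∃ h : Set Y → Set X, (∀ R ∈ K'.sep, h R ∈ K.sep) ∧
    (∀ R R' : Set Y, R ∈ K'.sep → R' ∈ K'.sep → R' ⊆ R → h R' ⊆ h R) ∧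
    ∃ t ∈ K'.QP, ∀ R ∈ K'.sep, t ∈ K'.orth (K'.impSet (f '' h R) R)

/-- An applicative morphism between the implicative algebras `A(K)` and `A(K')`,
where `𝒫(Π)` carries the reverse-inclusion order (so `≤` is `⊇`, and infima are
unions). -/
def IsAlgAppMorSets {X Y : Type*} (K : AKS X) (K' : AKS Y) (F : Set X → Set Y) : Prop :=
  (∀ P ∈ K.sep, F P ∈ K'.sep) ∧
  (∃ R ∈ K'.sep, ∀ P Q : Set X, K.impSet P Q ∈ K.sep →
      K'.impSet (F (K.impSet P Q)) (K'.impSet (F P) (F Q)) ⊆ R) ∧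
  (∀ 𝒳 : Set (Set X), F (⋃₀ 𝒳) = ⋃₀ (F '' 𝒳))

/-- A computationally dense applicative morphism between `A(K)` and `A(K')`. -/
def IsAlgCompDenseSets {X Y : Type*} (K : AKS X) (K' : AKS Y)
    (F : Set X → Set Y) : Prop :=
  IsAlgAppMorSets K K' F ∧
  ∃ h : Set Y → Set X, (∀ R ∈ K'.sep, h R ∈ K.sep) ∧
    (∀ R R' : Set Y, R ∈ K'.sep → R' ∈ K'.sep → R' ⊆ R → h R' ⊆ h R) ∧
    ∃ T ∈ K'.sep, ∀ R ∈ K'.sep, K'.impSet (F (h R)) R ⊆ T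

/-- If `f : Π → Π'` is an applicative morphism of AKSs then the image map
`𝒫(f) : 𝒫(Π) → 𝒫(Π')` is an applicative morphism of the implicative algebras
`A(K)`, `A(K')`; computational density of `f` gives computational density of `𝒫(f)`. -/
theorem image_functor_A {X Y : Type*} (K : AKS X) (K' : AKS Y) (f : X → Y) :
    (IsAKSAppMor K K' f → IsAlgAppMorSets K K' (fun P => f '' P)) ∧
    (IsAKSCompDense K K' f → IsAlgCompDenseSets K K' (fun P => f '' P)) := by
  have main : IsAKSAppMor K K' f → IsAlgAppMorSets K K' (fun P => f '' P) := by
    rintro ⟨h1, r, hr, hr2⟩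
    refine ⟨h1, ⟨{y | K'.perp r y}, ⟨r, hr, fun p hp => hp⟩, ?_⟩, ?_⟩
    · intro P Q hPQ σ hσ
      exact hr2 Q P hPQ σ hσ
    · intro 𝒳
      ext y
      simp [Set.mem_sUnion, Set.mem_image]
      tauto
  refine ⟨main, ?_⟩
  rintro ⟨hmor, h, hsep, hmono, t, ht, ht2⟩
  refine ⟨main hmor, h, hsep, hmono, {y | K'.perp t y}, ⟨t, ht, fun p hp => hp⟩, ?_⟩
  intro R hR σ hσ
  exact ht2 R hR σ hσ
end

section
/- Let f : (A, S_A) → (B, S_B) be an applicative morphism of implicative algebras. Then f, regarded as a map between the abstract Krivine structures K(A) and K(B), is an applicative morphism of AKSs. Moreover, if f is computationally dense as a morphism of implicative algebras, then K(f) = f is computationally dense as a morphism of AKSs. -/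
/-- In the AKS `K(A)` associated to an implicative algebra, `⊥P` is the set of
lower bounds of `P`. -/
def lowOrth {A : Type*} [CompleteLattice A] (P : Set A) : Set A :=
  {t | ∀ p ∈ P, t ≤ p}

/-- The push-implication of the AKS `K(A)`: `P ⇒ Q = {t → π : t ∈ ⊥P, π ∈ Q}`. -/
def pushSet {A : Type*} [CompleteLattice A] (imp : A → A → A) (P Q : Set A) : Set A :=
  {x | ∃ t ∈ lowOrth P, ∃ q ∈ Q, x = imp t q}

/-- The separator of `A(K(A))`: subsets admitting a lower bound in `S`. -/
def sepSet {A : Type*} [CompleteLattice A] (S : Set A) : Set (Set A) :=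
  {R | ∃ t ∈ S, t ∈ lowOrth R}

/-- An applicative morphism of implicative algebras induces an applicative morphism
between the associated abstract Krivine structures `K(A)` and `K(B)`; moreover it is
computationally dense if the original morphism is. -/
theorem K_functor {A B : Type*} [CompleteLattice A] [CompleteLattice B]
    (impA : A → A → A) (impB : B → B → B)
    (hmonoA : ∀ a a' b b' : A, a' ≤ a → b ≤ b' → impA a b ≤ impA a' b')
    (hinfA : ∀ (a : A) (P : Set A), impA a (sInf P) = ⨅ b ∈ P, impA a b)
    (hmonoB : ∀ a a' b b' : B, a' ≤ a → b ≤ b' → impB a b ≤ impB a' b')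
    (hinfB : ∀ (a : B) (P : Set B), impB a (sInf P) = ⨅ b ∈ P, impB a b)
    (SA : Set A) (SB : Set B)
    (SAup : ∀ a b : A, a ∈ SA → a ≤ b → b ∈ SA)
    (SAmp : ∀ a b : A, impA a b ∈ SA → a ∈ SA → b ∈ SA)
    (SAk : (⨅ (x : A) (y : A), impA x (impA y x)) ∈ SA)
    (SAs : (⨅ (x : A) (y : A) (z : A),
        impA (impA x (impA y z)) (impA (impA x y) (impA x z))) ∈ SA)
    (SBup : ∀ a b : B, a ∈ SB → a ≤ b → b ∈ SB)
    (SBmp : ∀ a b : B, impB a b ∈ SB → a ∈ SB → b ∈ SB)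
    (SBk : (⨅ (x : B) (y : B), impB x (impB y x)) ∈ SB)
    (SBs : (⨅ (x : B) (y : B) (z : B),
        impB (impB x (impB y z)) (impB (impB x y) (impB x z))) ∈ SB)
    (f : A → B)
    (hf1 : ∀ a ∈ SA, f a ∈ SB)
    (hf2 : ∃ r ∈ SB, ∀ a a' : A, impA a a' ∈ SA →
        r ≤ impB (f (impA a a')) (impB (f a) (f a')))
    (hf3 : ∀ P : Set A, f (sInf P) = sInf (f '' P)) :
    -- (a): K(f) = f is an applicative morphism of AKSs
    ((∀ P : Set A, P ∈ sepSet SA → (f '' P) ∈ sepSet SB) ∧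
      (∃ r ∈ SB, ∀ P P' : Set A, pushSet impA P' P ∈ sepSet SA →
        ∀ σ ∈ pushSet impB (f '' pushSet impA P' P)
            (pushSet impB (f '' P') (f '' P)), r ≤ σ)) ∧
    -- (b): computational density transfers from f to K(f)
    ((∃ h : B → A, (∀ b ∈ SB, h b ∈ SA) ∧
        (∀ b b' : B, b ∈ SB → b' ∈ SB → b ≤ b' → h b ≤ h b') ∧
        ∃ t ∈ SB, ∀ b ∈ SB, t ≤ impB (f (h b)) b) →
      ∃ hh : Set B → Set A, (∀ R ∈ sepSet SB, hh R ∈ sepSet SA) ∧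
        (∀ R R' : Set B, R ∈ sepSet SB → R' ∈ sepSet SB → R' ⊆ R → hh R' ⊆ hh R) ∧
        ∃ t ∈ SB, ∀ R ∈ sepSet SB, ∀ σ ∈ pushSet impB (f '' hh R) R, t ≤ σ) := by
  -- f is monotone
  have fmono : ∀ a b : A, a ≤ b → f a ≤ f b := by
    intro a b hab
    have h1 : sInf ({a, b} : Set A) = a := by
      rw [sInf_pair]; exact inf_eq_left.mpr hab
    have h2 := hf3 ({a, b} : Set A)
    rw [h1] at h2
    rw [h2]
    exact sInf_le ⟨b, Or.inr rfl, rfl⟩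
  constructor
  · constructor
    · rintro P ⟨t, htS, hlb⟩
      exact ⟨f t, hf1 t htS, fun q hq => by
        rcases hq with ⟨p, hp, rfl⟩; exact fmono t p (hlb p hp)⟩
    · obtain ⟨r, hrS, hr⟩ := hf2
      refine ⟨r, hrS, ?_⟩
      rintro P P' ⟨s, hsS, hslb⟩ σ ⟨t, ht, q, ⟨u, hu, fp, ⟨p, hp, rfl⟩, rfl⟩, rfl⟩
      set a := sInf P' with ha
      have haorth : a ∈ lowOrth P' := fun p' hp' => sInf_le hp'
      have hmem : impA a p ∈ pushSet impA P' P := ⟨a, haorth, p, hp, rfl⟩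
      have hSA : impA a p ∈ SA := SAup s _ hsS (hslb _ hmem)
      have h1 : r ≤ impB (f (impA a p)) (impB (f a) (f p)) := hr a p hSA
      have h2 : t ≤ f (impA a p) := ht _ ⟨impA a p, hmem, rfl⟩
      have h3 : u ≤ f a := by
        rw [hf3 P']
        exact le_sInf (fun x hx => by rcases hx with ⟨p', hp', rfl⟩; exact hu _ ⟨p', hp', rfl⟩)
      exact h1.trans (hmonoB _ t _ _ h2 (hmonoB (f a) u (f p) (f p) h3 le_rfl))
  · rintro ⟨h, hS, hmono, t₀, ht₀S, ht₀⟩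
    refine ⟨fun R => h '' {b | b ∈ SB ∧ sInf R ≤ b}, ?_, ?_, t₀, ht₀S, ?_⟩
    · rintro R ⟨b₀, hb₀S, hb₀⟩
      have hins : sInf R ∈ SB := SBup b₀ _ hb₀S (le_sInf hb₀)
      refine ⟨h (sInf R), hS _ hins, ?_⟩
      rintro a ⟨b, ⟨hbS, hle⟩, rfl⟩
      exact hmono _ _ hins hbS hle
    · rintro R R' _ _ hsub a ⟨b, ⟨hbS, hle⟩, rfl⟩
      exact ⟨b, ⟨hbS, (sInf_le_sInf hsub).trans hle⟩, rfl⟩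
    · rintro R ⟨b₀, hb₀S, hb₀⟩ σ ⟨u, hu, π, hπ, rfl⟩
      have hins : sInf R ∈ SB := SBup b₀ _ hb₀S (le_sInf hb₀)
      have hmem : h (sInf R) ∈ h '' {b | b ∈ SB ∧ sInf R ≤ b} := ⟨sInf R, ⟨hins, le_rfl⟩, rfl⟩
      have h1 : u ≤ f (h (sInf R)) := hu _ ⟨_, hmem, rfl⟩
      exact (ht₀ _ hins).trans (hmonoB _ u _ _ h1 (sInf_le hπ))
end

section
/- Let (A, S) be an implicative algebra. Consider 𝒫(A) ordered by reverse inclusion, with implication C ⤳ D = {c → d : c ∈ A, c ≤ ⨅ C, d ∈ D} and separator 𝔖 = {C ⊆ A : ⨅ C ∈ S} (this is the implicative algebra A(K(A))). Then the map ε : 𝒫(A) → A defined by ε(C) = ⨅ C is a computationally dense applicative morphism from (𝒫(A), ⊇, ⤳, 𝔖) to (A, ≤, →, S); in particular a right inverse witnessing density is given by h : a ↦ {b ∈ A : a ≤ b}. -/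
/-- The implication of the implicative algebra `A(K(A))` on `𝒫(A)` (ordered by
reverse inclusion): `C ⤳ D = {c → d : c ≤ ⨅ C, d ∈ D}`. -/
def impSets {A : Type*} [CompleteLattice A] (imp : A → A → A) (C D : Set A) : Set A :=
  {x | ∃ c d : A, c ≤ sInf C ∧ d ∈ D ∧ x = imp c d}

/-- The counit map `ε(C) = ⨅ C : 𝒫(A) → A` is a computationally dense applicative
morphism from `A(K(A)) = (𝒫(A), ⊇, ⤳, 𝔖)` (with `𝔖 = {C : ⨅ C ∈ S}`) to `(A, ≤, →, S)`,
a density witness being `h : a ↦ {b : a ≤ b}`, a right inverse of `ε`. -/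
theorem counit_comp_dense {A : Type*} [CompleteLattice A] (imp : A → A → A)
    (hmono : ∀ a a' b b' : A, a' ≤ a → b ≤ b' → imp a b ≤ imp a' b')
    (hinf : ∀ (a : A) (P : Set A), imp a (sInf P) = ⨅ b ∈ P, imp a b)
    (S : Set A)
    (Sup : ∀ a b : A, a ∈ S → a ≤ b → b ∈ S)
    (Smp : ∀ a b : A, imp a b ∈ S → a ∈ S → b ∈ S)
    (Sk : (⨅ (x : A) (y : A), imp x (imp y x)) ∈ S)
    (Ss : (⨅ (x : A) (y : A) (z : A),
        imp (imp x (imp y z)) (imp (imp x y) (imp x z))) ∈ S) :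
    -- (1) ε maps the separator 𝔖 into S
    (∀ C : Set A, sInf C ∈ S → sInf C ∈ S) ∧
    -- (2) ε is applicative: uniform realizer for implications
    (∃ r ∈ S, ∀ C D : Set A, sInf (impSets imp C D) ∈ S →
        r ≤ imp (sInf (impSets imp C D)) (imp (sInf C) (sInf D))) ∧
    -- (3) ε commutes with infima (infima in 𝒫(A) are unions)
    (∀ 𝒳 : Set (Set A), sInf (⋃₀ 𝒳) = ⨅ C ∈ 𝒳, sInf C) ∧
    -- h maps S into 𝔖 and is monotone (w.r.t reverse inclusion on 𝒫(A))
    (∀ a ∈ S, sInf {b : A | a ≤ b} ∈ S) ∧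
    (∀ a a' : A, a ∈ S → a' ∈ S → a ≤ a' → {b : A | a' ≤ b} ⊆ {b : A | a ≤ b}) ∧
    -- h is a right inverse of ε
    (∀ a : A, sInf {b : A | a ≤ b} = a) ∧
    (∃ t ∈ S, ∀ b ∈ S, t ≤ imp (sInf {x : A | b ≤ x}) b) := by
  -- the combinator k and the identity i = ⨅ a, a → a
  set k : A := ⨅ (x : A) (y : A), imp x (imp y x) with hk
  have hkle : ∀ x y : A, k ≤ imp x (imp y x) := fun x y =>
    le_trans (iInf_le _ x) (iInf_le _ y)
  set i : A := ⨅ a : A, imp a a with hi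
  have hile : ∀ a : A, i ≤ imp a a := fun a => iInf_le _ a
  -- i ∈ S
  have hiS : i ∈ S := by
    have hstep : (⨅ (x : A) (y : A) (z : A),
        imp (imp x (imp y z)) (imp (imp x y) (imp x z))) ≤ imp k (imp k i) := by
      have : ∀ a : A, (⨅ (x : A) (y : A) (z : A),
          imp (imp x (imp y z)) (imp (imp x y) (imp x z))) ≤ imp k (imp k (imp a a)) := by
        intro a
        have hs : (⨅ (x : A) (y : A) (z : A),
            imp (imp x (imp y z)) (imp (imp x y) (imp x z))) ≤
            imp (imp a (imp (imp a a) a)) (imp (imp a (imp a a)) (imp a a)) :=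
          le_trans (iInf_le _ a) (le_trans (iInf_le _ (imp a a)) (iInf_le _ a))
        refine le_trans hs (hmono _ _ _ _ (hkle a (imp a a))
          (hmono _ _ _ _ (hkle a a) le_rfl))
      calc (⨅ (x : A) (y : A) (z : A),
            imp (imp x (imp y z)) (imp (imp x y) (imp x z)))
          ≤ ⨅ a : A, imp k (imp k (imp a a)) := le_iInf this
        _ = imp k (imp k i) := by
            have h1 : ∀ X : A → A, imp k (⨅ a, X a) = ⨅ a, imp k (X a) := fun X => by
              rw [iInf, hinf, iInf_range]
            rw [hi, h1, h1]
    have h1 : imp k (imp k i) ∈ S := Sup _ _ Ss hstep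
    exact Smp _ _ (Smp _ _ h1 Sk) Sk
  have hIci : ∀ a : A, sInf {b : A | a ≤ b} = a := fun a =>
    le_antisymm (sInf_le le_rfl) (le_sInf fun b hb => hb)
  refine ⟨fun C h => h, ?_, ?_, ?_, ?_, ?_, ?_⟩
  · -- (2)
    refine ⟨i, hiS, fun C D _ => ?_⟩
    have hx : sInf (impSets imp C D) ≤ imp (sInf C) (sInf D) := by
      rw [hinf]
      refine le_iInf fun d => le_iInf fun hd => sInf_le ⟨sInf C, d, le_rfl, hd, rfl⟩
    exact le_trans (hile _) (hmono _ _ _ _ le_rfl hx)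
  · -- (3)
    intro 𝒳
    exact sInf_sUnion 𝒳
  · intro a ha
    rwa [hIci]
  · intro a a' _ _ h b hb
    exact le_trans h hb
  · exact hIci
  · refine ⟨i, hiS, fun b _ => ?_⟩
    rw [hIci]
    exact hile b
end

section
/- Let X be a set and let c : 𝒫(X) → 𝒫(X) be an interior operator on 𝒫(X) ordered by reverse inclusion, i.e. a map with P ⊆ c(P), c(c(P)) = c(P), and P ⊆ Q implies c(P) ⊆ c(Q). Define κ : 𝒫(X) → 𝒫(X) by κ(P) = ⋃_{x ∈ P} c({x}). Then: κ is again such an operator (P ⊆ κ(P), κ idempotent, κ monotone); κ preserves arbitrary unions, κ(⋃_i P_i) = ⋃_i κ(P_i); κ(P) ⊆ c(P) for every P ⊆ X; and κ is the largest union-preserving such operator below c: for every operator ρ : 𝒫(X) → 𝒫(X) with P ⊆ ρ(P), ρ idempotent, ρ monotone, ρ preserving arbitrary unions, and ρ(P) ⊆ c(P) for all P, one has ρ(P) ⊆ κ(P) for all P ⊆ X. In other words, c is AL-approximable with Alexandroff approximation κ. -/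
/-- The Alexandroff approximation `κ(P) = ⋃_{x ∈ P} c({x})` of a set-theoretic
closure operator `c` (an interior operator for reverse inclusion). -/
def alexApprox {X : Type*} (c : Set X → Set X) (P : Set X) : Set X :=
  ⋃ x ∈ P, c {x}

/-- For an interior operator `c` on `𝒫(X)` with reverse inclusion (i.e. a closure
operator: extensive, idempotent, monotone), `κ(P) = ⋃_{x∈P} c({x})` is again such an
operator, preserves arbitrary unions, lies below `c`, and is the largest
union-preserving such operator below `c`: `c` is AL-approximable with Alexandroff
approximation `κ`. -/
theorem powerset_AL_approximable {X : Type*} (c : Set X → Set X)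
    (hext : ∀ P, P ⊆ c P) (hidem : ∀ P, c (c P) = c P)
    (hmono : ∀ P Q : Set X, P ⊆ Q → c P ⊆ c Q) :
    (∀ P, P ⊆ alexApprox c P) ∧
    (∀ P, alexApprox c (alexApprox c P) = alexApprox c P) ∧
    (∀ P Q : Set X, P ⊆ Q → alexApprox c P ⊆ alexApprox c Q) ∧
    (∀ 𝒳 : Set (Set X), alexApprox c (⋃₀ 𝒳) = ⋃₀ (alexApprox c '' 𝒳)) ∧
    (∀ P, alexApprox c P ⊆ c P) ∧
    (∀ ρ : Set X → Set X, (∀ P, P ⊆ ρ P) → (∀ P, ρ (ρ P) = ρ P) →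
      (∀ P Q : Set X, P ⊆ Q → ρ P ⊆ ρ Q) →
      (∀ 𝒳 : Set (Set X), ρ (⋃₀ 𝒳) = ⋃₀ (ρ '' 𝒳)) →
      (∀ P, ρ P ⊆ c P) → ∀ P, ρ P ⊆ alexApprox c P) := by
  have kext : ∀ P : Set X, P ⊆ alexApprox c P := by
    intro P x hx
    exact Set.mem_biUnion hx (hext {x} rfl)
  have kmono : ∀ P Q : Set X, P ⊆ Q → alexApprox c P ⊆ alexApprox c Q := by
    intro P Q hPQ y hy
    rcases Set.mem_iUnion₂.1 hy with ⟨x, hxP, hyc⟩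
    exact Set.mem_biUnion (hPQ hxP) hyc
  have kle : ∀ P : Set X, alexApprox c P ⊆ c P := by
    intro P y hy
    rcases Set.mem_iUnion₂.1 hy with ⟨x, hxP, hyc⟩
    exact hmono _ _ (Set.singleton_subset_iff.2 hxP) hyc
  have kidem : ∀ P : Set X, alexApprox c (alexApprox c P) = alexApprox c P := by
    intro P
    apply Set.Subset.antisymm
    · intro z hz
      rcases Set.mem_iUnion₂.1 hz with ⟨y, hyk, hzc⟩
      rcases Set.mem_iUnion₂.1 hyk with ⟨x, hxP, hyc⟩
      have : c {y} ⊆ c {x} := by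
        have h1 : c {y} ⊆ c (c {x}) :=
          hmono _ _ (Set.singleton_subset_iff.2 hyc)
        rwa [hidem] at h1
      exact Set.mem_biUnion hxP (this hzc)
    · exact kext _
  refine ⟨kext, kidem, kmono, ?_, kle, ?_⟩
  · intro 𝒳
    apply Set.Subset.antisymm
    · intro z hz
      rcases Set.mem_iUnion₂.1 hz with ⟨x, hxU, hzc⟩
      rcases hxU with ⟨P, hP, hxP⟩
      exact ⟨alexApprox c P, ⟨P, hP, rfl⟩, Set.mem_biUnion hxP hzc⟩
    · intro z hz
      rcases hz with ⟨_, ⟨P, hP, rfl⟩, hzP⟩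
      exact kmono P _ (Set.subset_sUnion_of_mem hP) hzP
  · intro ρ _ _ _ hρU hρc P
    have hP : P = ⋃₀ ((fun x => ({x} : Set X)) '' P) := by
      ext y; simp
    calc ρ P = ⋃₀ (ρ '' ((fun x => ({x} : Set X)) '' P)) := by
          rw [← hρU]; exact congrArg ρ hP
      _ ⊆ alexApprox c P := by
          intro z hz
          rcases hz with ⟨_, ⟨_, ⟨x, hxP, rfl⟩, rfl⟩, hzρ⟩
          exact Set.mem_biUnion hxP (hρc _ hzρ)
end

section
/- Let A be a complete lattice and let ι : A → A be an interior operator. Then ι is AL-approximable: the set {κ : κ is an Alexandroff interior operator on A and ι ≤ κ pointwise} has a least element ι_∞; i.e. there exists an Alexandroff interior operator ι_∞ with ι ≤ ι_∞, and for every Alexandroff interior operator τ with ι ≤ τ one has ι_∞ ≤ τ. -/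
/-- An interior operator on a complete lattice: deflationary, idempotent, monotone. -/
def IsInterior {A : Type*} [CompleteLattice A] (ι : A → A) : Prop :=
  (∀ a, ι a ≤ a) ∧ (∀ a, ι (ι a) = ι a) ∧ (∀ a b : A, a ≤ b → ι a ≤ ι b)

/-- The Alexandroff condition: the operator commutes with arbitrary infima. -/
def IsAlexandroffInterior {A : Type*} [CompleteLattice A] (ι : A → A) : Prop :=
  IsInterior ι ∧ ∀ B : Set A, ι (sInf B) = ⨅ b ∈ B, ι b

/-- Finite compositions of Alexandroff interior operators lying above `ι`. -/
inductive ALChain {A : Type*} [CompleteLattice A] (ι : A → A) : (A → A) → Prop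
  | id' : ALChain ι id
  | comp (τ f : A → A) (h1 : IsAlexandroffInterior τ) (h2 : ∀ a, ι a ≤ τ a)
      (hf : ALChain ι f) : ALChain ι (τ ∘ f)

section ALChain

variable {A : Type*} [CompleteLattice A] {ι : A → A}

lemma ALChain.defl {f : A → A} (hf : ALChain ι f) : ∀ a, f a ≤ a := by
  induction hf with
  | id' => intro a; exact le_rfl
  | comp τ g h1 h2 hg ih =>
      intro a
      exact le_trans (h1.1.1 (g a)) (ih a)

lemma ALChain.mono {f : A → A} (hf : ALChain ι f) {a b : A} (hab : a ≤ b) :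
    f a ≤ f b := by
  induction hf with
  | id' => exact hab
  | comp τ g h1 h2 hg ih => exact h1.1.2.2 _ _ ih

lemma alex_iInf {τ : A → A} (hτ : IsAlexandroffInterior τ) {ιx : Sort*}
    (s : ιx → A) : τ (⨅ i, s i) = ⨅ i, τ (s i) := by
  have h := hτ.2 (Set.range s)
  rw [sInf_range] at h
  rw [h, iInf_range]

lemma ALChain.iInf_comm {f : A → A} (hf : ALChain ι f) {ιx : Sort*}
    (s : ιx → A) : f (⨅ i, s i) = ⨅ i, f (s i) := by
  induction hf with
  | id' => rfl
  | comp τ g h1 h2 hg ih =>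
      show τ (g (⨅ i, s i)) = ⨅ i, τ (g (s i))
      rw [ih, alex_iInf h1]

lemma ALChain.ge (hι : IsInterior ι) {f : A → A} (hf : ALChain ι f) :
    ∀ a, ι a ≤ f a := by
  induction hf with
  | id' => exact hι.1
  | comp τ g h1 h2 hg ih =>
      intro a
      calc ι a = ι (ι a) := (hι.2.1 a).symm
        _ ≤ ι (g a) := hι.2.2 _ _ (ih a)
        _ ≤ τ (g a) := h2 (g a)

lemma ALChain.comp' {f g : A → A} (hf : ALChain ι f) (hg : ALChain ι g) :
    ALChain ι (f ∘ g) := by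
  induction hf with
  | id' => exact hg
  | comp τ h h1 h2 hh ih => exact ALChain.comp τ (h ∘ g) h1 h2 ih

end ALChain

/-- Every interior operator on a complete lattice is AL-approximable: the set of
Alexandroff interior operators lying above it (pointwise) has a least element. -/
theorem AL_approximable {A : Type*} [CompleteLattice A] (ι : A → A)
    (hι : IsInterior ι) :
    ∃ κ : A → A, IsAlexandroffInterior κ ∧ (∀ a, ι a ≤ κ a) ∧
      ∀ τ : A → A, IsAlexandroffInterior τ → (∀ a, ι a ≤ τ a) → ∀ a, κ a ≤ τ a := by
  classical
  set κ : A → A := fun a => ⨅ f : {f : A → A // ALChain ι f}, f.1 a with hκ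
  have hdefl : ∀ a, κ a ≤ a := fun a =>
    le_trans (iInf_le _ ⟨id, ALChain.id'⟩) le_rfl
  have hmono : ∀ a b : A, a ≤ b → κ a ≤ κ b := by
    intro a b hab
    exact le_iInf fun f => le_trans (iInf_le _ f) (f.2.mono hab)
  have hidem : ∀ a, κ (κ a) = κ a := by
    intro a
    refine le_antisymm (hdefl (κ a)) ?_
    refine le_iInf fun f => ?_
    have : f.1 (κ a) = ⨅ g : {f : A → A // ALChain ι f}, f.1 (g.1 a) :=
      f.2.iInf_comm _
    rw [this]
    refine le_iInf fun g => ?_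
    exact iInf_le (fun h : {f : A → A // ALChain ι f} => h.1 a)
      ⟨f.1 ∘ g.1, f.2.comp' g.2⟩
  have halex : ∀ B : Set A, κ (sInf B) = ⨅ b ∈ B, κ b := by
    intro B
    have h1 : ∀ f : {f : A → A // ALChain ι f},
        f.1 (sInf B) = ⨅ b ∈ B, f.1 b := by
      intro f
      have := f.2.iInf_comm (fun b : B => (b : A))
      rw [show sInf B = ⨅ b : B, (b : A) from sInf_eq_iInf' B, this,
        ← iInf_subtype'']
    calc κ (sInf B) = ⨅ f : {f : A → A // ALChain ι f}, ⨅ b ∈ B, f.1 b := by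
          simp only [hκ]; exact iInf_congr h1
      _ = ⨅ b ∈ B, κ b := by
          rw [iInf_comm]
          refine iInf_congr fun b => ?_
          rw [iInf_comm]
  refine ⟨κ, ⟨⟨hdefl, hidem, hmono⟩, halex⟩, ?_, ?_⟩
  · intro a
    exact le_iInf fun f => f.2.ge hι a
  · intro τ hτ hτι a
    exact le_trans (iInf_le _ ⟨τ ∘ id, ALChain.comp τ id hτ hτι ALChain.id'⟩) le_rfl
end

section
/- Let (A, ≤, →) be an implicative structure and ι an Alexandroff interior operator on A. Then: (1) the set A_ι = {a : ι(a) = a} of ι-open elements is closed under arbitrary infima of A (so (A_ι, ≤) is a complete meet-semilattice with infima computed in A); (2) the operation a →_ι b = ι(a → b) on A_ι satisfies the axioms of an implicative structure on A_ι: it is antitone in the first variable, monotone in the second variable, and for a ∈ A_ι and B ⊆ A_ι, a →_ι (⨅ B) = ⨅_{b ∈ B} (a →_ι b); (3) if S ⊆ A is upward closed and satisfies modus ponens for → (a → b ∈ S and a ∈ S imply b ∈ S), then S ∩ A_ι is upward closed in A_ι and satisfies modus ponens for →_ι. -/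
/-- The set of fixed points (open elements) of an operator. -/
def fixedSet {A : Type*} (ι : A → A) : Set A := {x | ι x = x}

/-- Changing the implication by an Alexandroff interior operator: the open elements
`A_ι` are closed under arbitrary infima, `a →_ι b := ι(a → b)` is an implicative
structure on `A_ι`, and separator-type conditions restrict to `S ∩ A_ι`. -/
theorem change_implicative_structure {A : Type*} [CompleteLattice A]
    (imp : A → A → A)
    (hmono : ∀ a a' b b' : A, a' ≤ a → b ≤ b' → imp a b ≤ imp a' b')
    (hinf : ∀ (a : A) (B : Set A), imp a (sInf B) = ⨅ b ∈ B, imp a b)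
    (ι : A → A)
    (hdefl : ∀ a, ι a ≤ a) (hidem : ∀ a, ι (ι a) = ι a)
    (hmonoι : ∀ a b : A, a ≤ b → ι a ≤ ι b)
    (halex : ∀ B : Set A, ι (sInf B) = ⨅ b ∈ B, ι b) :
    -- (1) A_ι is closed under arbitrary infima
    (∀ C : Set A, C ⊆ fixedSet ι → sInf C ∈ fixedSet ι) ∧
    -- (2) a →_ι b := ι (a → b) is an implicative structure on A_ι
    (∀ a a' b b', a ∈ fixedSet ι → a' ∈ fixedSet ι → b ∈ fixedSet ι → b' ∈ fixedSet ι →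
      a' ≤ a → b ≤ b' → ι (imp a b) ≤ ι (imp a' b')) ∧
    (∀ a : A, a ∈ fixedSet ι → ∀ B : Set A, B ⊆ fixedSet ι →
      ι (imp a (sInf B)) = ⨅ b ∈ B, ι (imp a b)) ∧
    -- (3) upward closure and modus ponens restrict to S ∩ A_ι
    (∀ S : Set A, (∀ a b : A, a ∈ S → a ≤ b → b ∈ S) →
      (∀ a b : A, imp a b ∈ S → a ∈ S → b ∈ S) →
      ((∀ a b, a ∈ fixedSet ι → b ∈ fixedSet ι →
          a ∈ S ∩ fixedSet ι → a ≤ b → b ∈ S ∩ fixedSet ι) ∧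
       (∀ a b, a ∈ fixedSet ι → b ∈ fixedSet ι →
          ι (imp a b) ∈ S ∩ fixedSet ι → a ∈ S ∩ fixedSet ι → b ∈ S ∩ fixedSet ι))) := by
  refine ⟨?_, ?_, ?_, ?_⟩
  · intro C hC
    show ι (sInf C) = sInf C
    rw [halex]
    rw [sInf_eq_iInf]
    exact iInf_congr fun b => iInf_congr fun hb => hC hb
  · intro a a' b b' _ _ _ _ ha hb
    exact hmonoι _ _ (hmono a a' b b' ha hb)
  · intro a _ B hB
    have h1 : imp a (sInf B) = sInf (imp a '' B) := by
      rw [hinf, sInf_image]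
    rw [h1, halex, iInf_image]
  · intro S hup hmp
    constructor
    · rintro a b _ hb ⟨haS, _⟩ hab
      exact ⟨hup a b haS hab, hb⟩
    · rintro a b _ hb ⟨hiS, _⟩ ⟨haS, _⟩
      have : imp a b ∈ S := hup _ _ hiS (hdefl _)
      exact ⟨hmp a b this haS, hb⟩
end

section
/- Let (A, ≤, →) be an implicative structure, ι an Alexandroff interior operator on A, and c_ι the associated closure operator defined by c_ι(a) = ⨅ {b ∈ A_ι : a ≤ b}. Let ∘ be the application map of → on A, and let ∘_ι be the application map of →_ι on A_ι, i.e. a ∘_ι b = ⨅ {d ∈ A_ι : a ≤ ι(b → d)} for a, b ∈ A_ι. Then for all a, b ∈ A_ι: a ∘_ι b = c_ι(a ∘ b). -/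
/-- The closure operator associated to an Alexandroff interior operator:
`c_ι(a) = ⨅ {b ∈ A_ι : a ≤ b}`. -/
def closureOf {A : Type*} [CompleteLattice A] (ι : A → A) (a : A) : A :=
  sInf {b | b ∈ fixedSet ι ∧ a ≤ b}

/-- The application map of the modified implication `a →_ι b = ι(a → b)` on `A_ι`:
`a ∘_ι b = ⨅ {d ∈ A_ι : a ≤ ι(b → d)}`. -/
def appIota {A : Type*} [CompleteLattice A] (imp : A → A → A) (ι : A → A) (a b : A) : A :=
  sInf {d | d ∈ fixedSet ι ∧ a ≤ ι (imp b d)}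

/-- For open elements `a, b ∈ A_ι`, the application of the modified implicative
structure is the closure of the original application: `a ∘_ι b = c_ι(a ∘ b)`. -/
theorem appIota_eq_closure_app {A : Type*} [CompleteLattice A]
    (imp : A → A → A)
    (hmono : ∀ a a' b b' : A, a' ≤ a → b ≤ b' → imp a b ≤ imp a' b')
    (hinf : ∀ (a : A) (B : Set A), imp a (sInf B) = ⨅ b ∈ B, imp a b)
    (ι : A → A)
    (hdefl : ∀ a, ι a ≤ a) (hidem : ∀ a, ι (ι a) = ι a)
    (hmonoι : ∀ a b : A, a ≤ b → ι a ≤ ι b)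
    (halex : ∀ B : Set A, ι (sInf B) = ⨅ b ∈ B, ι b)
    (a b : A) (ha : a ∈ fixedSet ι) (hb : b ∈ fixedSet ι) :
    appIota imp ι a b = closureOf ι (appOf imp a b) := by
  have key : a ≤ imp b (appOf imp a b) := by
    rw [appOf, hinf]
    exact le_iInf fun c => le_iInf fun hc => hc
  unfold appIota closureOf appOf
  congr 1
  ext d
  constructor
  · rintro ⟨hd, had⟩
    refine ⟨hd, sInf_le ?_⟩
    exact (had.trans (hdefl _) : a ≤ imp b d)
  · rintro ⟨hd, had⟩
    refine ⟨hd, ?_⟩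
    have : a ≤ imp b d := key.trans (hmono b b _ d le_rfl had)
    calc a = ι a := ha.symm
    _ ≤ ι (imp b d) := hmonoι _ _ this
end

section
/- Let (A, ≤, →) be an implicative structure with associated application ∘, let i = ⨅_{a ∈ A} (a → a), and let ι be an Alexandroff interior operator on A such that for all a, b ∈ A, ι(a) → b = a → b. Then: (1) for all a ∈ A, i ∘ a ≤ ι(a) ≤ a; and (2) for all a, b ∈ A, a ∘ ι(b) = a ∘ b. -/
/-- If the Alexandroff interior operator `ι` satisfies `ι(a) → b = a → b`, then
with `i = ⨅ (a → a)`: (1) `i ∘ a ≤ ι(a) ≤ a`, and (2) `a ∘ ι(b) = a ∘ b`. -/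
theorem iota_compatible_imp {A : Type*} [CompleteLattice A]
    (imp : A → A → A)
    (hmono : ∀ a a' b b' : A, a' ≤ a → b ≤ b' → imp a b ≤ imp a' b')
    (hinf : ∀ (a : A) (B : Set A), imp a (sInf B) = ⨅ b ∈ B, imp a b)
    (ι : A → A)
    (hdefl : ∀ a, ι a ≤ a) (hidem : ∀ a, ι (ι a) = ι a)
    (hmonoι : ∀ a b : A, a ≤ b → ι a ≤ ι b)
    (halex : ∀ B : Set A, ι (sInf B) = ⨅ b ∈ B, ι b)
    (hcomp : ∀ a b : A, imp (ι a) b = imp a b) :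
    (∀ a : A, appOf imp (⨅ x : A, imp x x) a ≤ ι a ∧ ι a ≤ a) ∧
    (∀ a b : A, appOf imp a (ι b) = appOf imp a b) := by
  constructor
  · intro a
    refine ⟨sInf_le ?_, hdefl a⟩
    show (⨅ x : A, imp x x) ≤ imp a (ι a)
    calc (⨅ x : A, imp x x) ≤ imp (ι a) (ι a) := iInf_le _ _
      _ = imp a (ι a) := hcomp a (ι a)
  · intro a b
    unfold appOf
    congr 1
    ext c
    simp [hcomp]
end
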